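/- There do not exist a constant C < 2 and a map f : Δ̃₂ → c₀ satisfying d_Δ(σ,τ) ≤ ‖f(σ) − f(τ)‖_∞ ≤ C·d_Δ(σ,τ) for all σ, τ ∈ Δ̃₂; in particular, the metric space Δ̃₂ does not embed into c₀ with distortion strictly less than 2. -/

import Mathlib

/-- The subset `Δ̃₂ = {∅} ∪ {{n} : n ≥ 1} ∪ {{1,i} : i ≥ 2} ∪ {{2,j} : j ≥ 3}` of `Δ₂`,
where the positive integers are `1, 2, 3, …`. -/
def DeltaTildeTwo : Type :=
  {σ : Finset ℕ // σ = ∅ ∨ (∃ n, 1 ≤ n ∧ σ = {n}) ∨ (∃ i, 2 ≤ i ∧ σ = {1, i}) ∨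
    (∃ j, 3 ≤ j ∧ σ = {2, j})}

/-- The singleton `{n+1}` as an element of `Δ̃₂`. -/
def DTT.sg (n : ℕ) : DeltaTildeTwo := ⟨{n+1}, Or.inr (Or.inl ⟨n+1, by omega, rfl⟩)⟩

/-- The pair `{1, i+3}` as an element of `Δ̃₂`. -/
def DTT.pOne (i : ℕ) : DeltaTildeTwo :=
  ⟨{1, i+3}, Or.inr (Or.inr (Or.inl ⟨i+3, by omega, rfl⟩))⟩

/-- The pair `{2, j+3}` as an element of `Δ̃₂`. -/
def DTT.pTwo (j : ℕ) : DeltaTildeTwo :=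
  ⟨{2, j+3}, Or.inr (Or.inr (Or.inr ⟨j+3, by omega, rfl⟩))⟩

lemma DTT.floor_eq_imp {δ a b : ℝ} (hδ : 0 < δ) (h : ⌊a/δ⌋ = ⌊b/δ⌋) : |a - b| < δ := by
  have key : ∀ u v : ℝ, ⌊u/δ⌋ = ⌊v/δ⌋ → u - v < δ := by
    intro u v huv
    have h1 : u/δ < ⌊v/δ⌋ + 1 := huv ▸ Int.lt_floor_add_one (u/δ)
    have h2 : (⌊v/δ⌋ : ℝ) ≤ v/δ := Int.floor_le _
    have h3 : (u - v)/δ < 1 := by rw [sub_div]; linarith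
    have := (div_lt_one hδ).mp h3
    linarith
  rw [abs_sub_lt_iff]
  exact ⟨key a b h, key b a h.symm⟩

/-- `Δ̃₂` does not embed into `c₀` (zero-at-infinity sequences with the sup norm) with
distortion strictly less than `2`. -/
theorem deltaTildeTwo_no_embedding_c0_distortion_lt_two :
    ¬ ∃ (C : ℝ) (f : DeltaTildeTwo → ZeroAtInftyContinuousMap ℕ ℝ), C < 2 ∧
      ∀ σ τ : DeltaTildeTwo,
        ((symmDiff σ.1 τ.1).card : ℝ) ≤ ‖f σ - f τ‖ ∧
          ‖f σ - f τ‖ ≤ C * ((symmDiff σ.1 τ.1).card : ℝ) := by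
  rintro ⟨C, f, hC, hf⟩
  -- coordinatewise upper bound
  have key : ∀ σ τ : DeltaTildeTwo, ∀ k : ℕ,
      |(f σ : ℕ → ℝ) k - (f τ : ℕ → ℝ) k| ≤ C * ((symmDiff σ.1 τ.1).card : ℝ) := by
    intro σ τ k
    have h2 : |(f σ - f τ) k| ≤ ‖f σ - f τ‖ := by
      rw [← ZeroAtInftyContinuousMap.norm_toBCF_eq_norm]
      exact (f σ - f τ).toBCF.norm_coe_le_norm k
    have h3 : (f σ - f τ) k = (f σ : ℕ → ℝ) k - (f τ : ℕ → ℝ) k := by simp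
    rw [h3] at h2; exact h2.trans (hf σ τ).2
  -- C ≥ 1
  have hC1 : 1 ≤ C := by
    have h := hf (DTT.sg 2) (DTT.sg 3)
    have hcard : ((symmDiff (DTT.sg 2).1 (DTT.sg 3).1).card : ℝ) = 2 := by
      have : symmDiff (DTT.sg 2).1 (DTT.sg 3).1 = {3, 4} := by
        ext x; simp [DTT.sg, Finset.mem_symmDiff]; omega
      rw [this, Finset.card_insert_of_notMem (by simp), Finset.card_singleton]
      norm_num
    rw [hcard] at h
    linarith [h.1, h.2]
  set δ : ℝ := 2 - C with hδdef
  have hδpos : 0 < δ := by simp only [hδdef]; linarith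
  have hδ1 : δ ≤ 1 := by simp only [hδdef]; linarith
  -- finite "relevant coordinates" from x₁ - x₂
  obtain ⟨N, hN⟩ : ∃ N, ∀ k ≥ N, |(f (DTT.sg 0) - f (DTT.sg 1)) k| < δ := by
    have h := (f (DTT.sg 0) - f (DTT.sg 1)).zero_at_infty'
    rw [Filter.cocompact_eq_cofinite, Nat.cofinite_eq_atTop] at h
    have := Metric.tendsto_nhds.mp h δ hδpos
    simp only [Filter.eventually_atTop, Real.dist_eq, sub_zero] at this
    exact this
  -- bound used in pigeonhole
  have hbd : ∀ i : ℕ, ∀ k : ℕ,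
      |(f (DTT.sg (i+2)) : ℕ → ℝ) k - (f (DTT.sg 0) : ℕ → ℝ) k| ≤ 4 := by
    intro i k
    have hcard : ((symmDiff (DTT.sg (i+2)).1 (DTT.sg 0).1).card : ℝ) = 2 := by
      have : symmDiff (DTT.sg (i+2)).1 (DTT.sg 0).1 = {i+3, 1} := by
        ext x; simp [DTT.sg, Finset.mem_symmDiff]; omega
      rw [this, Finset.card_insert_of_notMem (by simp), Finset.card_singleton]
      norm_num
    have h := key (DTT.sg (i+2)) (DTT.sg 0) k
    rw [hcard] at h
    linarith
  set M : ℤ := ⌈(4:ℝ)/δ⌉ with hM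
  -- pigeonhole map
  have hmem : ∀ i : ℕ, ∀ k : Fin N,
      ⌊((f (DTT.sg (i+2)) : ℕ → ℝ) k - (f (DTT.sg 0) : ℕ → ℝ) k)/δ⌋ ∈ Finset.Icc (-M) M := by
    intro i k
    have h := hbd i k
    rw [abs_le] at h
    rw [Finset.mem_Icc]
    constructor
    · rw [hM]
      have h1 : (-4:ℝ)/δ ≤ ((f (DTT.sg (i+2)) : ℕ → ℝ) k - (f (DTT.sg 0) : ℕ → ℝ) k)/δ :=
        div_le_div_of_nonneg_right h.1 hδpos.le
      have := Int.floor_le_floor h1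
      rwa [neg_div, Int.floor_neg] at this
    · rw [hM]
      have h1 : ((f (DTT.sg (i+2)) : ℕ → ℝ) k - (f (DTT.sg 0) : ℕ → ℝ) k)/δ ≤ (4:ℝ)/δ :=
        div_le_div_of_nonneg_right h.2 hδpos.le
      exact (Int.floor_le_floor h1).trans (Int.floor_le_ceil _)
  let φ : ℕ → (Fin N → (Finset.Icc (-M) M : Finset ℤ)) := fun i k =>
    ⟨⌊((f (DTT.sg (i+2)) : ℕ → ℝ) k - (f (DTT.sg 0) : ℕ → ℝ) k)/δ⌋, hmem i k⟩
  obtain ⟨a, b, hab, hφ⟩ := Finite.exists_ne_map_eq_of_infinite φ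
  -- witness coordinate for the pair ({1,a+3},{2,b+3})
  have h4 : (4:ℝ) ≤ ‖f (DTT.pOne a) - f (DTT.pTwo b)‖ := by
    have hcard : ((symmDiff (DTT.pOne a).1 (DTT.pTwo b).1).card : ℝ) = 4 := by
      have h : symmDiff (DTT.pOne a).1 (DTT.pTwo b).1 = {1, 2, a+3, b+3} := by
        ext x; simp [DTT.pOne, DTT.pTwo, Finset.mem_symmDiff]; omega
      rw [h,
        Finset.card_insert_of_notMem
          (by simp only [Finset.mem_insert, Finset.mem_singleton]; omega),
        Finset.card_insert_of_notMem
          (by simp only [Finset.mem_insert, Finset.mem_singleton]; omega),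
        Finset.card_insert_of_notMem
          (by simp only [Finset.mem_insert, Finset.mem_singleton]; omega),
        Finset.card_singleton]
      norm_num
    have := (hf (DTT.pOne a) (DTT.pTwo b)).1
    rw [hcard] at this
    exact this
  obtain ⟨k, hk⟩ : ∃ k : ℕ,
      4 - δ/2 < |(f (DTT.pOne a) : ℕ → ℝ) k - (f (DTT.pTwo b) : ℕ → ℝ) k| := by
    by_contra hcon
    push_neg at hcon
    have hle : ‖f (DTT.pOne a) - f (DTT.pTwo b)‖ ≤ 4 - δ/2 := by
      rw [← ZeroAtInftyContinuousMap.norm_toBCF_eq_norm]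
      apply BoundedContinuousFunction.norm_le (by linarith) |>.mpr
      intro x
      have := hcon x
      simpa using this
    linarith
  -- coordinate estimates
  have e1 : |(f (DTT.pOne a) : ℕ → ℝ) k - (f (DTT.sg 0) : ℕ → ℝ) k| ≤ C := by
    have hcard : ((symmDiff (DTT.pOne a).1 (DTT.sg 0).1).card : ℝ) = 1 := by
      have : symmDiff (DTT.pOne a).1 (DTT.sg 0).1 = {a+3} := by
        ext x; simp [DTT.pOne, DTT.sg, Finset.mem_symmDiff]; omega
      rw [this, Finset.card_singleton]; norm_num
    have h := key (DTT.pOne a) (DTT.sg 0) k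
    rw [hcard] at h; linarith
  have e2 : |(f (DTT.pOne a) : ℕ → ℝ) k - (f (DTT.sg (a+2)) : ℕ → ℝ) k| ≤ C := by
    have hcard : ((symmDiff (DTT.pOne a).1 (DTT.sg (a+2)).1).card : ℝ) = 1 := by
      have : symmDiff (DTT.pOne a).1 (DTT.sg (a+2)).1 = {1} := by
        ext x; simp [DTT.pOne, DTT.sg, Finset.mem_symmDiff]; omega
      rw [this, Finset.card_singleton]; norm_num
    have h := key (DTT.pOne a) (DTT.sg (a+2)) k
    rw [hcard] at h; linarith
  have e3 : |(f (DTT.pTwo b) : ℕ → ℝ) k - (f (DTT.sg 1) : ℕ → ℝ) k| ≤ C := by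
    have hcard : ((symmDiff (DTT.pTwo b).1 (DTT.sg 1).1).card : ℝ) = 1 := by
      have : symmDiff (DTT.pTwo b).1 (DTT.sg 1).1 = {b+3} := by
        ext x; simp [DTT.pTwo, DTT.sg, Finset.mem_symmDiff]; omega
      rw [this, Finset.card_singleton]; norm_num
    have h := key (DTT.pTwo b) (DTT.sg 1) k
    rw [hcard] at h; linarith
  have e4 : |(f (DTT.pTwo b) : ℕ → ℝ) k - (f (DTT.sg (b+2)) : ℕ → ℝ) k| ≤ C := by
    have hcard : ((symmDiff (DTT.pTwo b).1 (DTT.sg (b+2)).1).card : ℝ) = 1 := by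
      have : symmDiff (DTT.pTwo b).1 (DTT.sg (b+2)).1 = {2} := by
        ext x; simp [DTT.pTwo, DTT.sg, Finset.mem_symmDiff]; omega
      rw [this, Finset.card_singleton]; norm_num
    have h := key (DTT.pTwo b) (DTT.sg (b+2)) k
    rw [hcard] at h; linarith
  -- |x₁(k) - x₂(k)| is large, so k < N
  have tri : ∀ u v p q : ℝ, |u - v| ≤ |u - p| + |p - q| + |q - v| := by
    intro u v p q
    calc |u - v| = |(u - p) + (p - q) + (q - v)| := by ring_nf
    _ ≤ |u - p| + |p - q| + |q - v| := abs_add_three _ _ _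
  have h12 : 4 - δ/2 - 2*C < |(f (DTT.sg 0) : ℕ → ℝ) k - (f (DTT.sg 1) : ℕ → ℝ) k| := by
    have := tri ((f (DTT.pOne a) : ℕ → ℝ) k) ((f (DTT.pTwo b) : ℕ → ℝ) k)
      ((f (DTT.sg 0) : ℕ → ℝ) k) ((f (DTT.sg 1) : ℕ → ℝ) k)
    have h3' : |(f (DTT.sg 1) : ℕ → ℝ) k - (f (DTT.pTwo b) : ℕ → ℝ) k| ≤ C := by
      rw [abs_sub_comm]; exact e3
    rw [abs_sub_comm ((f (DTT.sg 1) : ℕ → ℝ) k)] at this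
    linarith
  have hkN : k < N := by
    by_contra hcon
    push_neg at hcon
    have := hN k hcon
    have hsimp : (f (DTT.sg 0) - f (DTT.sg 1)) k
        = (f (DTT.sg 0) : ℕ → ℝ) k - (f (DTT.sg 1) : ℕ → ℝ) k := by simp
    rw [hsimp] at this
    have hδle : δ ≤ 4 - δ/2 - 2*C := by simp only [hδdef]; linarith
    linarith
  -- |x_{a+3}(k) - x_{b+3}(k)| is large
  have hab' : 4 - δ/2 - 2*C <
      |(f (DTT.sg (a+2)) : ℕ → ℝ) k - (f (DTT.sg (b+2)) : ℕ → ℝ) k| := by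
    have := tri ((f (DTT.pOne a) : ℕ → ℝ) k) ((f (DTT.pTwo b) : ℕ → ℝ) k)
      ((f (DTT.sg (a+2)) : ℕ → ℝ) k) ((f (DTT.sg (b+2)) : ℕ → ℝ) k)
    have h4' : |(f (DTT.sg (b+2)) : ℕ → ℝ) k - (f (DTT.pTwo b) : ℕ → ℝ) k| ≤ C := by
      rw [abs_sub_comm]; exact e4
    rw [abs_sub_comm ((f (DTT.sg (b+2)) : ℕ → ℝ) k)] at this
    linarith
  -- but pigeonhole says it is small
  have hsmall : |(f (DTT.sg (a+2)) : ℕ → ℝ) k - (f (DTT.sg (b+2)) : ℕ → ℝ) k| < δ := by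
    have := congrFun hφ ⟨k, hkN⟩
    have hfl : ⌊((f (DTT.sg (a+2)) : ℕ → ℝ) k - (f (DTT.sg 0) : ℕ → ℝ) k)/δ⌋
        = ⌊((f (DTT.sg (b+2)) : ℕ → ℝ) k - (f (DTT.sg 0) : ℕ → ℝ) k)/δ⌋ :=
      congrArg Subtype.val this
    have := DTT.floor_eq_imp hδpos hfl
    have heq : ((f (DTT.sg (a+2)) : ℕ → ℝ) k - (f (DTT.sg 0) : ℕ → ℝ) k)
        - ((f (DTT.sg (b+2)) : ℕ → ℝ) k - (f (DTT.sg 0) : ℕ → ℝ) k)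
        = (f (DTT.sg (a+2)) : ℕ → ℝ) k - (f (DTT.sg (b+2)) : ℕ → ℝ) k := by ring
    rwa [heq] at this
  have hδle : δ ≤ 4 - δ/2 - 2*C := by simp only [hδdef]; linarith
  linarith
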